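/- For every real number x > 0, x − 1 − log(x) ≤ (9/64) · ( x − 1/x )². -/

import Mathlib

open Real Set

noncomputable def auxF : ℝ → ℝ := fun x => (9/64)*(x - 1/x)^2 - (x - 1) + Real.log x

lemma auxF_hasDeriv (x : ℝ) (hx : x ≠ 0) :
    HasDerivAt auxF ((9/64)*(2*(x - 1/x)*(1 + (x^2)⁻¹)) - 1 + x⁻¹) x := by
  have h1 : HasDerivAt (fun y : ℝ => y - 1/y) (1 + (x^2)⁻¹) x := by
    have := (hasDerivAt_id x).fun_sub ((hasDerivAt_inv hx))
    simpa [one_div, sub_neg_eq_add] using this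
  have h2 : HasDerivAt (fun y : ℝ => (y - 1/y)^2) (2*(x - 1/x)^(1)*(1 + (x^2)⁻¹)) x := by
    simpa using h1.fun_pow 2
  have h3 := (h2.const_mul (9/64:ℝ)).fun_sub ((hasDerivAt_id x).sub_const 1)
  have h4 := h3.fun_add (Real.hasDerivAt_log hx)
  refine h4.congr_deriv ?_
  ring

lemma cubic_pos (y : ℝ) (hy : 0 < y) : 0 < 9*y^3 - 23*y^2 + 9*y + 9 := by
  nlinarith [sq_nonneg (3*y - 4), mul_nonneg hy.le (sq_nonneg (3*y - 4)), sq_nonneg (y - 1), sq_nonneg (y - 3/2), mul_pos hy hy]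

lemma deriv_factored (y : ℝ) (hy : 0 < y) :
    (9/64)*(2*(y - 1/y)*(1 + (y^2)⁻¹)) - 1 + y⁻¹
      = (y - 1)*(9*y^3 - 23*y^2 + 9*y + 9)/(32*y^3) := by
  field_simp
  ring

/-- For every real number `x > 0`, `x - 1 - log x ≤ (9/64) * (x - 1/x)^2`. -/
theorem stmt_13 : ∀ x : ℝ, 0 < x → x - 1 - Real.log x ≤ (9 / 64) * (x - 1 / x) ^ 2 := by
  intro x hx
  have hF1 : auxF 1 = 0 := by simp [auxF]
  have key : 0 ≤ auxF x := by
    rcases le_total 1 x with h1 | h1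
    · have mono : MonotoneOn auxF (Ici 1) := by
        apply monotoneOn_of_deriv_nonneg (convex_Ici 1)
        · intro y hy
          have hy0 : (y:ℝ) ≠ 0 := by
            have : (1:ℝ) ≤ y := hy
            positivity
          exact (auxF_hasDeriv y hy0).continuousAt.continuousWithinAt
        · rw [interior_Ici]
          intro y hy
          have hy0 : (y:ℝ) ≠ 0 := by
            have : (1:ℝ) < y := hy
            positivity
          exact (auxF_hasDeriv y hy0).differentiableAt.differentiableWithinAt
        · rw [interior_Ici]
          intro y hy
          have hy1 : (1:ℝ) < y := hy
          have hy0 : (0:ℝ) < y := lt_trans one_pos hy1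
          rw [(auxF_hasDeriv y hy0.ne').deriv, deriv_factored y hy0]
          apply div_nonneg
          · exact mul_nonneg (by linarith) (cubic_pos y hy0).le
          · positivity
      have := mono (mem_Ici.mpr le_rfl) (mem_Ici.mpr h1) h1
      linarith [hF1 ▸ this]
    · have anti : AntitoneOn auxF (Ioc 0 1) := by
        apply antitoneOn_of_deriv_nonpos (convex_Ioc 0 1)
        · intro y hy
          exact (auxF_hasDeriv y hy.1.ne').continuousAt.continuousWithinAt
        · rw [interior_Ioc]
          intro y hy
          exact (auxF_hasDeriv y hy.1.ne').differentiableAt.differentiableWithinAt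
        · rw [interior_Ioc]
          intro y hy
          have hy0 : (0:ℝ) < y := hy.1
          rw [(auxF_hasDeriv y hy0.ne').deriv, deriv_factored y hy0]
          apply div_nonpos_of_nonpos_of_nonneg
          · exact mul_nonpos_of_nonpos_of_nonneg (by linarith [hy.2]) (cubic_pos y hy0).le
          · positivity
      have := anti (mem_Ioc.mpr ⟨hx, h1⟩) (mem_Ioc.mpr ⟨one_pos, le_rfl⟩) h1
      linarith [hF1 ▸ this]
  have : auxF x = (9/64)*(x - 1/x)^2 - (x - 1) + Real.log x := rfl
  linarith [this ▸ key]
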